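/- Let L be an n×n real matrix, λ an eigenvalue of L, A = L − λI, K = PPᵀ with P invertible, and K_N = K − K Aᵀ (A K Aᵀ)⁺ A K. Then K_N is a nonzero matrix. -/
import Mathlib


open Matrix Real

/-- The four Penrose conditions characterizing the Moore-Penrose pseudoinverse. -/
def IsMoorePenrose {m n : Type*} [Fintype m] [Fintype n]
    (Q : Matrix m n ℝ) (Qp : Matrix n m ℝ) : Prop :=
  Q * Qp * Q = Q ∧ Qp * Q * Qp = Qp ∧ (Q * Qp)ᵀ = Q * Qp ∧ (Qp * Q)ᵀ = Qp * Q

theorem posterior_cov_ne_zero_of_eigenvalue {n : Type*} [Fintype n] [DecidableEq n]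
    (L P W : Matrix n n ℝ) (lam : ℝ) (hP : IsUnit P.det)
    (hlam : ∃ v : n → ℝ, v ≠ 0 ∧ L *ᵥ v = lam • v)
    (hW : IsMoorePenrose ((L - lam • 1) * (P * Pᵀ) * (L - lam • 1)ᵀ) W) :
    (P * Pᵀ) - (P * Pᵀ) * (L - lam • 1)ᵀ * W * (L - lam • 1) * (P * Pᵀ) ≠ 0 := by
  obtain ⟨v, hv, hLv⟩ := hlam
  set A : Matrix n n ℝ := L - lam • 1 with hA
  set K : Matrix n n ℝ := P * Pᵀ with hKdef
  have hAv : A *ᵥ v = 0 := by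
    rw [hA, sub_mulVec, hLv, smul_mulVec, one_mulVec, sub_self]
  have hK : IsUnit K.det := by
    rw [hKdef, det_mul, det_transpose]
    exact hP.mul hP
  intro h
  have h1 : K * (Aᵀ * W * A * K) = K := by
    have := sub_eq_zero.mp h
    simpa [Matrix.mul_assoc] using this.symm
  have h2 : Aᵀ * (W * A * K) = 1 := by
    have := congrArg (fun M => K⁻¹ * M) h1
    simp only [← Matrix.mul_assoc, Matrix.nonsing_inv_mul K hK, Matrix.one_mul] at this
    rw [← this]; simp [Matrix.mul_assoc]
  have hAunit : IsUnit A.det := by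
    rw [← det_transpose]
    exact Matrix.isUnit_det_of_right_inverse h2
  have : v = 0 := by
    have := congrArg (fun w => A⁻¹ *ᵥ w) hAv
    simpa [Matrix.mulVec_mulVec, Matrix.nonsing_inv_mul A hAunit] using this
  exact hv this
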